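/- Let A = A₀ ⊕ A₁ be a 3-dimensional Novikov superalgebra over ℂ of type S (not a Novikov algebra with grading forgotten). Then dim A₁ = 2. -/

import Mathlib

/-- A Novikov superalgebra over ℂ: a ℤ₂-graded vector space `V = A 0 ⊕ A 1`
with a bilinear product respecting the grading, satisfying the graded
left-symmetry and graded right-commutativity identities. -/
structure NovikovSuperAlgebra (V : Type*) [AddCommGroup V] [Module ℂ V] where
  mul : V →ₗ[ℂ] V →ₗ[ℂ] V
  grading : ZMod 2 → Submodule ℂ V
  spanning : ∀ x : V, ∃ x0 ∈ grading 0, ∃ x1 ∈ grading 1, x = x0 + x1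
  indep : ∀ x : V, x ∈ grading 0 → x ∈ grading 1 → x = 0
  mul_mem : ∀ i j : ZMod 2, ∀ u ∈ grading i, ∀ v ∈ grading j, mul u v ∈ grading (i + j)
  super_left_sym : ∀ i j : ZMod 2, ∀ u ∈ grading i, ∀ v ∈ grading j, ∀ w : V,
    mul (mul u v) w - mul u (mul v w)
      = ((-1 : ℂ) ^ (i.val * j.val)) • (mul (mul v u) w - mul v (mul u w))
  super_right_comm : ∀ i j : ZMod 2, ∀ u ∈ grading i, ∀ v ∈ grading j, ∀ w : V,
    mul (mul w u) v = ((-1 : ℂ) ^ (i.val * j.val)) • mul (mul w v) u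

/-- The (ungraded) Novikov algebra identities for a bilinear product. -/
def IsNovikovMul {V : Type*} [AddCommGroup V] [Module ℂ V]
    (mul : V →ₗ[ℂ] V →ₗ[ℂ] V) : Prop :=
  (∀ x y z : V, mul (mul x y) z - mul x (mul y z) = mul (mul y x) z - mul y (mul x z)) ∧
  (∀ x y z : V, mul (mul z x) y = mul (mul z y) x)

/-- Supercommutator of elements of parities `i`, `j`. -/
def sbr {V : Type*} [AddCommGroup V] [Module ℂ V]
    (mul : V →ₗ[ℂ] V →ₗ[ℂ] V) (i j : ZMod 2) (u v : V) : V :=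
  mul u v - ((-1 : ℂ) ^ (i.val * j.val)) • mul v u

open Module

namespace NovikovHelp

variable {V : Type*} [AddCommGroup V] [Module ℂ V]

/-- Defect of ungraded left-symmetry. -/
def T1 (m : V →ₗ[ℂ] V →ₗ[ℂ] V) (x y z : V) : V :=
  m (m x y) z - m x (m y z) - (m (m y x) z - m y (m x z))

/-- Defect of ungraded right-commutativity. -/
def T2 (m : V →ₗ[ℂ] V →ₗ[ℂ] V) (x y z : V) : V :=
  m (m z x) y - m (m z y) x

lemma T1_addl (m : V →ₗ[ℂ] V →ₗ[ℂ] V) (x x' y z : V) :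
    T1 m (x + x') y z = T1 m x y z + T1 m x' y z := by
  simp only [T1, map_add, LinearMap.add_apply]; abel

lemma T1_addr (m : V →ₗ[ℂ] V →ₗ[ℂ] V) (x y y' z : V) :
    T1 m x (y + y') z = T1 m x y z + T1 m x y' z := by
  simp only [T1, map_add, LinearMap.add_apply]; abel

lemma T1_smull (m : V →ₗ[ℂ] V →ₗ[ℂ] V) (a : ℂ) (x y z : V) :
    T1 m (a • x) y z = a • T1 m x y z := by
  simp only [T1, map_smul, LinearMap.smul_apply, smul_sub]

lemma T1_smulr (m : V →ₗ[ℂ] V →ₗ[ℂ] V) (a : ℂ) (x y z : V) :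
    T1 m x (a • y) z = a • T1 m x y z := by
  simp only [T1, map_smul, LinearMap.smul_apply, smul_sub]

lemma T1_self (m : V →ₗ[ℂ] V →ₗ[ℂ] V) (x z : V) : T1 m x x z = 0 := by
  simp [T1]

lemma T2_addl (m : V →ₗ[ℂ] V →ₗ[ℂ] V) (x x' y z : V) :
    T2 m (x + x') y z = T2 m x y z + T2 m x' y z := by
  simp only [T2, map_add, LinearMap.add_apply]; abel

lemma T2_addr (m : V →ₗ[ℂ] V →ₗ[ℂ] V) (x y y' z : V) :
    T2 m x (y + y') z = T2 m x y z + T2 m x y' z := by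
  simp only [T2, map_add, LinearMap.add_apply]; abel

lemma T2_smull (m : V →ₗ[ℂ] V →ₗ[ℂ] V) (a : ℂ) (x y z : V) :
    T2 m (a • x) y z = a • T2 m x y z := by
  simp only [T2, map_smul, LinearMap.smul_apply, smul_sub]

lemma T2_smulr (m : V →ₗ[ℂ] V →ₗ[ℂ] V) (a : ℂ) (x y z : V) :
    T2 m x (a • y) z = a • T2 m x y z := by
  simp only [T2, map_smul, LinearMap.smul_apply, smul_sub]

lemma T2_self (m : V →ₗ[ℂ] V →ₗ[ℂ] V) (x z : V) : T2 m x x z = 0 := by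
  simp [T2]

lemma T1_graded (N : NovikovSuperAlgebra V)
    (hpair : ∀ u ∈ N.grading 1, ∀ v ∈ N.grading 1, ∃ a : ℂ, v = a • u ∨ u = a • v)
    (i j : ZMod 2) (u v : V) (hu : u ∈ N.grading i) (hv : v ∈ N.grading j) (z : V) :
    T1 N.mul u v z = 0 := by
  have hsign : ((-1 : ℂ) ^ (i.val * j.val) = 1) ∨ (i = 1 ∧ j = 1) := by
    fin_cases i <;> fin_cases j <;> first | (right; exact ⟨rfl, rfl⟩) | (left; norm_num [ZMod.val])
  rcases hsign with hs | ⟨rfl, rfl⟩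
  · have := N.super_left_sym i j u hu v hv z
    rw [hs, one_smul] at this
    rw [T1, sub_eq_zero]
    exact this
  · obtain ⟨a, hva | huv⟩ := hpair u hu v hv
    · rw [hva, T1_smulr, T1_self, smul_zero]
    · rw [huv, T1_smull, T1_self, smul_zero]

lemma T2_graded (N : NovikovSuperAlgebra V)
    (hpair : ∀ u ∈ N.grading 1, ∀ v ∈ N.grading 1, ∃ a : ℂ, v = a • u ∨ u = a • v)
    (i j : ZMod 2) (u v : V) (hu : u ∈ N.grading i) (hv : v ∈ N.grading j) (z : V) :
    T2 N.mul u v z = 0 := by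
  have hsign : ((-1 : ℂ) ^ (i.val * j.val) = 1) ∨ (i = 1 ∧ j = 1) := by
    fin_cases i <;> fin_cases j <;> first | (right; exact ⟨rfl, rfl⟩) | (left; norm_num [ZMod.val])
  rcases hsign with hs | ⟨rfl, rfl⟩
  · have := N.super_right_comm i j u hu v hv z
    rw [hs, one_smul] at this
    rw [T2, sub_eq_zero]
    exact this
  · obtain ⟨a, hva | huv⟩ := hpair u hu v hv
    · rw [hva, T2_smulr, T2_self, smul_zero]
    · rw [huv, T2_smull, T2_self, smul_zero]

lemma isNovikov_of_pairs (N : NovikovSuperAlgebra V)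
    (hpair : ∀ u ∈ N.grading 1, ∀ v ∈ N.grading 1, ∃ a : ℂ, v = a • u ∨ u = a • v) :
    IsNovikovMul N.mul := by
  constructor
  · intro x y z
    have key : T1 N.mul x y z = 0 := by
      obtain ⟨x0, hx0, x1, hx1, rfl⟩ := N.spanning x
      obtain ⟨y0, hy0, y1, hy1, rfl⟩ := N.spanning y
      rw [T1_addl, T1_addr, T1_addr,
        T1_graded N hpair 0 0 _ _ hx0 hy0 z, T1_graded N hpair 0 1 _ _ hx0 hy1 z,
        T1_graded N hpair 1 0 _ _ hx1 hy0 z, T1_graded N hpair 1 1 _ _ hx1 hy1 z]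
      simp
    rw [T1, sub_sub, sub_eq_zero] at key
    rw [key]; abel
  · intro x y z
    have key : T2 N.mul x y z = 0 := by
      obtain ⟨x0, hx0, x1, hx1, rfl⟩ := N.spanning x
      obtain ⟨y0, hy0, y1, hy1, rfl⟩ := N.spanning y
      rw [T2_addl, T2_addr, T2_addr,
        T2_graded N hpair 0 0 _ _ hx0 hy0 z, T2_graded N hpair 0 1 _ _ hx0 hy1 z,
        T2_graded N hpair 1 0 _ _ hx1 hy0 z, T2_graded N hpair 1 1 _ _ hx1 hy1 z]
      simp
    rwa [T2, sub_eq_zero] at key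

end NovikovHelp

/-- a 3-dimensional Novikov superalgebra of type S has `dim A₁ = 2`. -/
theorem dim3_type_S_odd_dim_two {V : Type*} [AddCommGroup V] [Module ℂ V]
    [FiniteDimensional ℂ V] (hdim : Module.finrank ℂ V = 3)
    (N : NovikovSuperAlgebra V) (h : ¬ IsNovikovMul N.mul) :
    Module.finrank ℂ (N.grading 1) = 2 := by
  classical
  open NovikovHelp in
  have hsup : N.grading 0 ⊔ N.grading 1 = ⊤ := by
    rw [eq_top_iff]
    intro x _
    obtain ⟨x0, h0, x1, h1, rfl⟩ := N.spanning x
    exact Submodule.add_mem_sup h0 h1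
  have hdisj : N.grading 0 ⊓ N.grading 1 = ⊥ := by
    rw [eq_bot_iff]
    intro x hx
    exact (Submodule.mem_bot ℂ).2 (N.indep x hx.1 hx.2)
  have hsum : Module.finrank ℂ (N.grading 0) + Module.finrank ℂ (N.grading 1) = 3 := by
    have H := Submodule.finrank_sup_add_finrank_inf_eq (N.grading 0) (N.grading 1)
    rw [hsup, hdisj, finrank_top, hdim, finrank_bot] at H
    omega
  have hle : Module.finrank ℂ (N.grading 1) ≤ 3 := by omega
  -- rule out 0, 1, 3
  by_contra hne
  interval_cases hW1 : Module.finrank ℂ (N.grading 1)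
  · -- rank 0 : grading 1 = ⊥
    have hbot : N.grading 1 = ⊥ := Submodule.finrank_eq_zero.mp hW1
    refine h (NovikovHelp.isNovikov_of_pairs N ?_)
    intro u hu v hv
    rw [hbot, Submodule.mem_bot] at hu hv
    exact ⟨0, Or.inl (by rw [hv, zero_smul])⟩
  · -- rank 1
    refine h (NovikovHelp.isNovikov_of_pairs N ?_)
    intro u hu v hv
    by_cases hu0 : u = 0
    · exact ⟨0, Or.inr (by rw [hu0, zero_smul])⟩
    · have hspan : Submodule.span ℂ {u} = N.grading 1 := by
        apply Submodule.eq_of_le_of_finrank_le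
        · rwa [Submodule.span_singleton_le_iff_mem]
        · rw [hW1, finrank_span_singleton hu0]
      have : v ∈ Submodule.span ℂ ({u} : Set V) := hspan ▸ hv
      obtain ⟨a, ha⟩ := Submodule.mem_span_singleton.mp this
      exact ⟨a, Or.inl ha.symm⟩
  · exact hne rfl
  · -- rank 3 : grading 1 = ⊤, grading 0 = ⊥, so mul = 0
    have htop : N.grading 1 = ⊤ := Submodule.eq_top_of_finrank_eq (by rw [hW1, hdim])
    have h0 : N.grading 0 = ⊥ := Submodule.finrank_eq_zero.mp (by omega)
    have hmul : ∀ x y : V, N.mul x y = 0 := by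
      intro x y
      have := N.mul_mem 1 1 x (htop ▸ Submodule.mem_top) y (htop ▸ Submodule.mem_top)
      have h11 : (1 + 1 : ZMod 2) = 0 := by decide
      rw [h11, h0, Submodule.mem_bot] at this
      exact this
    exact h ⟨fun x y z => by simp [hmul], fun x y z => by simp [hmul]⟩
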